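/- Let x ∈ ℝ^d, γ > 0, q > 0 and r > 0, and for δ > 0 let Y_δ ∼ 𝒩(x, δγ Id). Then limsup_{δ↓0} δ·log E[ (1 + ‖Y_δ‖^q)·1{‖Y_δ‖ > r} ] ≤ −((r − ‖x‖)_+)²/(2γ). -/

import Mathlib

open MeasureTheory Filter Topology Metric Set Bornology
open scoped ENNReal NNReal Classical

noncomputable section

/-- `ℝ^d` as a Euclidean space. -/
abbrev Euc (d : ℕ) : Type := EuclideanSpace ℝ (Fin d)

/-- The family `𝓜` of connected components of local minimizers of `f`: connected sets `M`
for which there is an open `𝒱` with `M ⊊ 𝒱`, `M = argmin_{𝒱} f`, and `f > f(M)` on `𝒱 ∖ M`. -/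
def MinComps {d : ℕ} (f : Euc d → ℝ) : Set (Set (Euc d)) :=
  {M | IsConnected M ∧ ∃ V : Set (Euc d), IsOpen V ∧ M ⊂ V ∧
    M = {y | y ∈ V ∧ ∀ z ∈ V, f y ≤ f z} ∧ ∀ y ∈ V \ M, ∀ m ∈ M, f m < f y}

/-- `𝓜_* = ⋃_{M ∈ 𝓜} M`. -/
def MStar {d : ℕ} (f : Euc d → ℝ) : Set (Euc d) := ⋃ M ∈ MinComps f, M

/-- The attractor `Att(M) = {y : T_f(y) ∈ M}` of a component under the local solver `T_f`. -/
def Att {d : ℕ} (Tf : Euc d → Euc d) (M : Set (Euc d)) : Set (Euc d) := {y | Tf y ∈ M}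

/-- `f(M)`, the (constant) value of `f` on a component `M`. -/
def fVal {d : ℕ} (f : Euc d → ℝ) (M : Set (Euc d)) : ℝ := sInf (f '' M)

/-- The potential `V_x(M) = f(M) + (1/(2γ))·dist(x, closure(Att(M)))²`. -/
def Vx {d : ℕ} (f : Euc d → ℝ) (Tf : Euc d → Euc d) (x : Euc d) (γ : ℝ)
    (M : Set (Euc d)) : ℝ :=
  fVal f M + 1 / (2 * γ) * infDist x (closure (Att Tf M)) ^ 2

/-- `S_f^γ(x) = argmin_{M ∈ 𝓜} V_x(M)`. -/
def Sgamma {d : ℕ} (f : Euc d → ℝ) (Tf : Euc d → Euc d) (x : Euc d) (γ : ℝ) :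
    Set (Set (Euc d)) :=
  {M | M ∈ MinComps f ∧ ∀ Q ∈ MinComps f, Vx f Tf x γ M ≤ Vx f Tf x γ Q}

/-- The Gaussian measure `𝒩(x, s·Id)` on `ℝ^d`, given through its Lebesgue density. -/
def gaussMeasure {d : ℕ} (x : Euc d) (s : ℝ) : Measure (Euc d) :=
  volume.withDensity fun y =>
    ENNReal.ofReal ((2 * Real.pi * s) ^ (-(d : ℝ) / 2) * Real.exp (-‖y - x‖ ^ 2 / (2 * s)))

/-- The exact-expectation weighted barycenter
`m_{δ,γ} = E[T_f(Y_δ) e^{-f(T_f(Y_δ))/δ}] / E[e^{-f(T_f(Y_δ))/δ}]` for `Y_δ ∼ 𝒩(x, δγ Id)`. -/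
def bary {d : ℕ} (f : Euc d → ℝ) (Tf : Euc d → Euc d) (x : Euc d) (δ γ : ℝ) : Euc d :=
  (∫ y, Real.exp (-f (Tf y) / δ) ∂gaussMeasure x (δ * γ))⁻¹ •
    ∫ y, Real.exp (-f (Tf y) / δ) • Tf y ∂gaussMeasure x (δ * γ)

lemma dens_cont {d : ℕ} (x : Euc d) (s : ℝ) :
    Continuous fun y : Euc d =>
      (2 * Real.pi * s) ^ (-(d : ℝ) / 2) * Real.exp (-‖y - x‖ ^ 2 / (2 * s)) := by
  fun_prop

lemma gauss_setIntegral_eq {d : ℕ} (x : Euc d) {s : ℝ} (hs : 0 < s) {S : Set (Euc d)}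
    (hS : MeasurableSet S) (g : Euc d → ℝ) :
    ∫ y in S, g y ∂gaussMeasure x s =
      ∫ y in S, ((2 * Real.pi * s) ^ (-(d : ℝ) / 2) * Real.exp (-‖y - x‖ ^ 2 / (2 * s))) * g y := by
  unfold gaussMeasure
  have hmeas : Measurable fun y : Euc d =>
      ((2 * Real.pi * s) ^ (-(d : ℝ) / 2) * Real.exp (-‖y - x‖ ^ 2 / (2 * s))).toNNReal :=
    (dens_cont x s).measurable.real_toNNReal
  have h := setIntegral_withDensity_eq_setIntegral_smul hmeas g hS (μ := volume)
  simp only [ENNReal.ofReal] at *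
  rw [h]
  refine setIntegral_congr_fun hS (fun y _ => ?_)
  have hnn : 0 ≤ (2 * Real.pi * s) ^ (-(d : ℝ) / 2) * Real.exp (-‖y - x‖ ^ 2 / (2 * s)) := by
    positivity
  simp [NNReal.smul_def, Real.coe_toNNReal _ hnn]

lemma integrable_gauss_kernel {d : ℕ} (x : Euc d) {b : ℝ} (hb : 0 < b) :
    Integrable (fun y : Euc d => Real.exp (-(b * ‖y - x‖ ^ 2))) := by
  have h0 : Integrable (fun v : Euc d => Real.exp (-(b * ‖v‖ ^ 2))) := by
    have := (GaussianFourier.integrable_cexp_neg_mul_sq_norm_add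
      (V := Euc d) (b := (b : ℂ)) (by simpa using hb) 0 0).norm
    refine this.congr (Eventually.of_forall fun v => ?_)
    simp only [zero_mul, add_zero, inner_zero_left, Complex.ofReal_zero, mul_zero]
    rw [show -(b:ℂ) * (‖v‖:ℂ) ^ 2 = ((-(b * ‖v‖ ^ 2) : ℝ) : ℂ) by push_cast; ring]
    rw [Complex.norm_exp, Complex.ofReal_re]
  have := h0.comp_sub_right (g := x)
  simpa using this

lemma integral_gauss_kernel {d : ℕ} (x : Euc d) {b : ℝ} (hb : 0 < b) :
    ∫ y : Euc d, Real.exp (-(b * ‖y - x‖ ^ 2)) = (Real.pi / b) ^ ((d : ℝ) / 2) := by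
  rw [show (fun y : Euc d => Real.exp (-(b * ‖y - x‖ ^ 2)))
      = (fun v : Euc d => Real.exp (-(b * ‖v‖ ^ 2))) ∘ (fun y => y - x) from rfl]
  rw [Function.comp_def]
  rw [integral_sub_right_eq_self (fun v : Euc d => Real.exp (-(b * ‖v‖ ^ 2))) x]
  have := GaussianFourier.integral_rexp_neg_mul_sq_norm (V := Euc d) hb
  simp only [neg_mul] at this ⊢
  rw [this, finrank_euclideanSpace_fin]

lemma rpow_le_one_add_exp {t q : ℝ} (ht : 0 ≤ t) (hq : 0 < q) :
    t ^ q ≤ 1 + Real.exp (q * t) := by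
  rcases le_or_gt t 1 with h | h
  · have : t ^ q ≤ 1 := Real.rpow_le_one ht h hq.le
    nlinarith [Real.exp_pos (q * t)]
  · have h0 : (0:ℝ) < t := by linarith
    rw [← Real.exp_log (Real.rpow_pos_of_pos h0 q), Real.log_rpow h0]
    have : q * Real.log t ≤ q * t := by
      have := Real.log_le_sub_one_of_pos h0
      nlinarith
    nlinarith [Real.exp_le_exp.mpr this, Real.exp_pos (q * Real.log t)]

lemma poly_le_exp {d : ℕ} (x : Euc d) {q c : ℝ} (hq : 0 < q) (hc : 0 < c) (y : Euc d) :
    1 + ‖y‖ ^ q ≤ (2 + Real.exp (q * ‖x‖ + q ^ 2 / (4 * c))) * Real.exp (c * ‖y - x‖ ^ 2) := by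
  set u := ‖y - x‖ with hu
  have hu0 : 0 ≤ u := norm_nonneg _
  have hyx : ‖y‖ ≤ ‖x‖ + u := by
    have : y = x + (y - x) := by abel
    calc ‖y‖ = ‖x + (y - x)‖ := by rw [← this]
    _ ≤ ‖x‖ + ‖y - x‖ := norm_add_le _ _
  have h1 : ‖y‖ ^ q ≤ 1 + Real.exp (q * ‖y‖) := rpow_le_one_add_exp (norm_nonneg _) hq
  have h2 : q * ‖y‖ ≤ q * ‖x‖ + q ^ 2 / (4 * c) + c * u ^ 2 := by
    have hqu : q * u ≤ q ^ 2 / (4 * c) + c * u ^ 2 := by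
      rw [div_add' _ _ _ (by positivity), le_div_iff₀ (by positivity : (0:ℝ) < 4 * c)]
      nlinarith [sq_nonneg (2 * c * u - q)]
    nlinarith
  have h3 : Real.exp (q * ‖y‖) ≤ Real.exp (q * ‖x‖ + q ^ 2 / (4 * c)) * Real.exp (c * u ^ 2) := by
    rw [← Real.exp_add]
    exact Real.exp_le_exp.mpr h2
  have h4 : (1:ℝ) ≤ Real.exp (c * u ^ 2) := Real.one_le_exp (by positivity)
  nlinarith [Real.exp_pos (q * ‖x‖ + q ^ 2 / (4 * c))]

lemma F_integrable {d : ℕ} (x : Euc d) {q s : ℝ} (hq : 0 < q) (hs : 0 < s) :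
    Integrable (fun y : Euc d =>
      ((2 * Real.pi * s) ^ (-(d : ℝ) / 2) * Real.exp (-‖y - x‖ ^ 2 / (2 * s))) * (1 + ‖y‖ ^ q))
      volume := by
  set cs : ℝ := (2 * Real.pi * s) ^ (-(d : ℝ) / 2) with hcs
  have hcs0 : 0 < cs := Real.rpow_pos_of_pos (by positivity) _
  set K : ℝ := 2 + Real.exp (q * ‖x‖ + q ^ 2 / (4 * (1 / (4 * s)))) with hK
  have hK0 : 0 < K := by positivity
  have hint : Integrable (fun y : Euc d => cs * K * Real.exp (-(1 / (4 * s) * ‖y - x‖ ^ 2)))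
      volume := (integrable_gauss_kernel x (by positivity)).const_mul _
  refine hint.mono' ?_ (Eventually.of_forall fun y => ?_)
  · refine Continuous.aestronglyMeasurable ?_
    have : Continuous fun y : Euc d => ‖y‖ ^ q :=
      (continuous_norm).rpow_const (fun y => Or.inr hq.le)
    fun_prop
  · have hpos1 : (0:ℝ) ≤ 1 + ‖y‖ ^ q := by
      have := Real.rpow_nonneg (norm_nonneg y) q; linarith
    rw [Real.norm_eq_abs, abs_of_nonneg (by positivity)]
    have hb : 1 + ‖y‖ ^ q ≤ K * Real.exp (1 / (4 * s) * ‖y - x‖ ^ 2) :=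
      poly_le_exp x hq (by positivity) y
    have hsplit : Real.exp (-‖y - x‖ ^ 2 / (2 * s)) * Real.exp (1 / (4 * s) * ‖y - x‖ ^ 2)
        = Real.exp (-(1 / (4 * s) * ‖y - x‖ ^ 2)) := by
      rw [← Real.exp_add]
      congr 1
      field_simp
      ring
    calc cs * Real.exp (-‖y - x‖ ^ 2 / (2 * s)) * (1 + ‖y‖ ^ q)
        ≤ cs * Real.exp (-‖y - x‖ ^ 2 / (2 * s)) * (K * Real.exp (1 / (4 * s) * ‖y - x‖ ^ 2)) := by
          apply mul_le_mul_of_nonneg_left hb (by positivity)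
      _ = cs * K * (Real.exp (-‖y - x‖ ^ 2 / (2 * s)) * Real.exp (1 / (4 * s) * ‖y - x‖ ^ 2)) := by
          ring
      _ = cs * K * Real.exp (-(1 / (4 * s) * ‖y - x‖ ^ 2)) := by rw [hsplit]

lemma upper_bound {d : ℕ} (x : Euc d) {γ q r ε δ : ℝ} (hγ : 0 < γ) (hq : 0 < q) (hr : 0 < r)
    (hε : 0 < ε) (hε1 : ε < 1) (hδ : 0 < δ) (hδ1 : δ ≤ 1) :
    ∫ y in {y : Euc d | r < ‖y‖}, (1 + ‖y‖ ^ q) ∂gaussMeasure x (δ * γ) ≤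
      ((2 + Real.exp (q * ‖x‖ + q ^ 2 / (4 * (ε / (4 * γ))))) * (2 / ε) ^ ((d : ℝ) / 2)) *
        Real.exp (-((1 - ε) * (max (r - ‖x‖) 0) ^ 2) / (2 * (δ * γ))) := by
  set s : ℝ := δ * γ with hs_def
  have hs : 0 < s := by positivity
  have hsγ : s ≤ γ := by
    rw [hs_def]; nlinarith
  set a : ℝ := max (r - ‖x‖) 0 with ha_def
  have ha0 : 0 ≤ a := le_max_right _ _
  set S : Set (Euc d) := {y : Euc d | r < ‖y‖} with hS_def
  have hSmeas : MeasurableSet S := (isOpen_lt continuous_const continuous_norm).measurableSet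
  set cs : ℝ := (2 * Real.pi * s) ^ (-(d : ℝ) / 2) with hcs
  have hcs0 : 0 < cs := Real.rpow_pos_of_pos (by positivity) _
  set K0 : ℝ := 2 + Real.exp (q * ‖x‖ + q ^ 2 / (4 * (ε / (4 * γ)))) with hK0_def
  have hK00 : 0 < K0 := by positivity
  set E : ℝ := Real.exp (-((1 - ε) * a ^ 2) / (2 * s)) with hE
  have hE0 : 0 < E := Real.exp_pos _
  set G : Euc d → ℝ := fun y => E * (cs * K0 * Real.exp (-(ε / (4 * s) * ‖y - x‖ ^ 2))) with hG
  have hGint : Integrable G volume :=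
    ((integrable_gauss_kernel x (show (0:ℝ) < ε / (4 * s) by positivity)).const_mul
      (cs * K0)).const_mul E
  have hFint := F_integrable x hq hs
  -- pointwise bound on S
  have hFG : ∀ y ∈ S, (cs * Real.exp (-‖y - x‖ ^ 2 / (2 * s))) * (1 + ‖y‖ ^ q) ≤ G y := by
    intro y hy
    set u : ℝ := ‖y - x‖ with hu_def
    have hu0 : 0 ≤ u := norm_nonneg _
    have hua : a ≤ u := by
      have h1 : r - ‖x‖ ≤ u := by
        have : ‖y‖ - ‖x‖ ≤ ‖y - x‖ := by
          have := norm_sub_norm_le y x; linarith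
        have hy' : r < ‖y‖ := hy
        linarith
      exact max_le h1 hu0
    have hpb : 1 + ‖y‖ ^ q ≤ K0 * Real.exp (ε / (4 * γ) * u ^ 2) :=
      poly_le_exp x hq (by positivity) y
    have hmono : Real.exp (ε / (4 * γ) * u ^ 2) ≤ Real.exp (ε / (4 * s) * u ^ 2) := by
      apply Real.exp_le_exp.mpr
      apply mul_le_mul_of_nonneg_right _ (sq_nonneg u)
      apply div_le_div_of_nonneg_left hε.le (by positivity)
      nlinarith
    have hkey : Real.exp (ε / (4 * s) * u ^ 2) * Real.exp (-u ^ 2 / (2 * s)) ≤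
        E * Real.exp (-(ε / (4 * s) * u ^ 2)) := by
      rw [← Real.exp_add, hE, ← Real.exp_add, Real.exp_le_exp]
      have e1 : ε / (4 * s) * u ^ 2 + -u ^ 2 / (2 * s) = (ε * u ^ 2 - 2 * u ^ 2) / (4 * s) := by
        field_simp; ring
      have e2 : -((1 - ε) * a ^ 2) / (2 * s) + -(ε / (4 * s) * u ^ 2)
          = (-(2 * (1 - ε) * a ^ 2) - ε * u ^ 2) / (4 * s) := by
        field_simp; ring
      rw [e1, e2]
      apply div_le_div_of_nonneg_right _ (by positivity)
      have haa : a ^ 2 ≤ u ^ 2 := by nlinarith [mul_self_le_mul_self ha0 hua]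
      nlinarith [haa]
    calc (cs * Real.exp (-u ^ 2 / (2 * s))) * (1 + ‖y‖ ^ q)
        ≤ (cs * Real.exp (-u ^ 2 / (2 * s))) * (K0 * Real.exp (ε / (4 * s) * u ^ 2)) := by
          exact mul_le_mul_of_nonneg_left (hpb.trans (mul_le_mul_of_nonneg_left hmono hK00.le)) (by positivity)
      _ = cs * K0 * (Real.exp (ε / (4 * s) * u ^ 2) * Real.exp (-u ^ 2 / (2 * s))) := by ring
      _ ≤ cs * K0 * (E * Real.exp (-(ε / (4 * s) * u ^ 2))) := by
          apply mul_le_mul_of_nonneg_left hkey (by positivity)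
      _ = G y := by rw [hG]; ring
  have hεs : (0:ℝ) < ε / (4 * s) := by positivity
  have step1 : ∫ y in S, (1 + ‖y‖ ^ q) ∂gaussMeasure x s =
      ∫ y in S, (cs * Real.exp (-‖y - x‖ ^ 2 / (2 * s))) * (1 + ‖y‖ ^ q) :=
    gauss_setIntegral_eq x hs hSmeas _
  have step2 : (∫ y in S, (cs * Real.exp (-‖y - x‖ ^ 2 / (2 * s))) * (1 + ‖y‖ ^ q)) ≤
      ∫ y in S, G y :=
    setIntegral_mono_on hFint.integrableOn hGint.integrableOn hSmeas hFG
  have step3 : (∫ y in S, G y) ≤ ∫ y, G y :=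
    setIntegral_le_integral hGint (Eventually.of_forall fun y => by
      simp only [hG]; positivity)
  have step4 : (∫ y, G y) = E * (cs * K0 * (Real.pi / (ε / (4 * s))) ^ ((d : ℝ) / 2)) := by
    rw [hG, MeasureTheory.integral_const_mul, MeasureTheory.integral_const_mul, integral_gauss_kernel x hεs]
  have hone : (2 * Real.pi * s) ^ (-(d:ℝ)/2) * (2 * Real.pi * s) ^ ((d:ℝ)/2) = 1 := by
    rw [← Real.rpow_add (by positivity), neg_div, neg_add_cancel, Real.rpow_zero]
  have hAB : Real.pi / (ε / (4 * s)) = (2 * Real.pi * s) * (2 / ε) := by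
    field_simp
    ring
  have step5 : E * (cs * K0 * (Real.pi / (ε / (4 * s))) ^ ((d : ℝ) / 2)) =
      (K0 * (2 / ε) ^ ((d : ℝ) / 2)) * E := by
    rw [hAB, Real.mul_rpow (by positivity) (by positivity), hcs]
    linear_combination (E * K0 * (2 / ε) ^ ((d:ℝ) / 2)) * hone
  calc ∫ y in S, (1 + ‖y‖ ^ q) ∂gaussMeasure x s ≤ ∫ y, G y := by
        rw [step1]; exact step2.trans step3
    _ = (K0 * (2 / ε) ^ ((d : ℝ) / 2)) * E := by rw [step4, step5]

lemma lower_bound {d : ℕ} (x y0 : Euc d) {γ q r δ : ℝ} (hγ : 0 < γ) (hq : 0 < q) (hδ : 0 < δ)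
    (hy0 : r + 1/2 ≤ ‖y0‖) :
    (volume (ball y0 (1/2 : ℝ))).toReal *
      ((2 * Real.pi * (δ * γ)) ^ (-(d : ℝ) / 2) *
        Real.exp (-(‖y0 - x‖ + 1/2) ^ 2 / (2 * (δ * γ))))
      ≤ ∫ y in {y : Euc d | r < ‖y‖}, (1 + ‖y‖ ^ q) ∂gaussMeasure x (δ * γ) := by
  set s : ℝ := δ * γ with hs_def
  have hs : 0 < s := by positivity
  set S : Set (Euc d) := {y : Euc d | r < ‖y‖} with hS_def
  have hSmeas : MeasurableSet S := (isOpen_lt continuous_const continuous_norm).measurableSet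
  set cs : ℝ := (2 * Real.pi * s) ^ (-(d : ℝ) / 2) with hcs
  have hcs0 : 0 < cs := Real.rpow_pos_of_pos (by positivity) _
  set R : ℝ := ‖y0 - x‖ + 1/2 with hR
  have hR0 : 0 < R := by have := norm_nonneg (y0 - x); rw [hR]; linarith
  have hFint := F_integrable (q := q) (s := s) x hq hs
  have hFnn : ∀ y : Euc d, 0 ≤ (cs * Real.exp (-‖y - x‖ ^ 2 / (2 * s))) * (1 + ‖y‖ ^ q) := by
    intro y
    have := Real.rpow_nonneg (norm_nonneg y) q
    positivity
  have hsub : ball y0 (1/2 : ℝ) ⊆ S := by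
    intro y hy
    simp only [mem_ball, dist_eq_norm] at hy
    have h1 : ‖y0‖ - ‖y‖ ≤ ‖y - y0‖ := by
      have := norm_sub_norm_le y0 y
      rw [norm_sub_rev] at this
      linarith
    show r < ‖y‖
    linarith
  have hpoint : ∀ y ∈ ball y0 (1/2 : ℝ),
      cs * Real.exp (-R ^ 2 / (2 * s)) ≤ (cs * Real.exp (-‖y - x‖ ^ 2 / (2 * s))) * (1 + ‖y‖ ^ q) := by
    intro y hy
    simp only [mem_ball, dist_eq_norm] at hy
    have h1 : ‖y - x‖ ≤ R := by
      have := norm_sub_le_norm_sub_add_norm_sub y y0 x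
      rw [hR]
      have h2 := norm_sub_le (y - y0) (y0 - x)
      have h3 : y - x = (y - y0) + (y0 - x) := by abel
      calc ‖y - x‖ = ‖(y - y0) + (y0 - x)‖ := by rw [← h3]
        _ ≤ ‖y - y0‖ + ‖y0 - x‖ := norm_add_le _ _
        _ ≤ ‖y0 - x‖ + 1/2 := by linarith
    have h2 : ‖y - x‖ ^ 2 ≤ R ^ 2 := by nlinarith [norm_nonneg (y - x)]
    have h3 : Real.exp (-R ^ 2 / (2 * s)) ≤ Real.exp (-‖y - x‖ ^ 2 / (2 * s)) := by
      apply Real.exp_le_exp.mpr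
      apply div_le_div_of_nonneg_right _ (by positivity)
      linarith
    have h4 : (1:ℝ) ≤ 1 + ‖y‖ ^ q := by
      have := Real.rpow_nonneg (norm_nonneg y) q; linarith
    calc cs * Real.exp (-R ^ 2 / (2 * s)) ≤ cs * Real.exp (-‖y - x‖ ^ 2 / (2 * s)) :=
          mul_le_mul_of_nonneg_left h3 hcs0.le
      _ = (cs * Real.exp (-‖y - x‖ ^ 2 / (2 * s))) * 1 := by ring
      _ ≤ _ := by
          apply mul_le_mul_of_nonneg_left h4 (by positivity)
  have step1 : ∫ y in S, (1 + ‖y‖ ^ q) ∂gaussMeasure x s =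
      ∫ y in S, (cs * Real.exp (-‖y - x‖ ^ 2 / (2 * s))) * (1 + ‖y‖ ^ q) :=
    gauss_setIntegral_eq x hs hSmeas _
  have step2 : (∫ y in ball y0 (1/2 : ℝ), (cs * Real.exp (-‖y - x‖ ^ 2 / (2 * s))) * (1 + ‖y‖ ^ q))
      ≤ ∫ y in S, (cs * Real.exp (-‖y - x‖ ^ 2 / (2 * s))) * (1 + ‖y‖ ^ q) :=
    setIntegral_mono_set hFint.integrableOn (Eventually.of_forall fun y => hFnn y)
      (HasSubset.Subset.eventuallyLE hsub)
  have step3 : (volume (ball y0 (1/2 : ℝ))).toReal * (cs * Real.exp (-R ^ 2 / (2 * s)))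
      ≤ ∫ y in ball y0 (1/2 : ℝ), (cs * Real.exp (-‖y - x‖ ^ 2 / (2 * s))) * (1 + ‖y‖ ^ q) := by
    have h := setIntegral_mono_on
      (integrableOn_const (C := cs * Real.exp (-R ^ 2 / (2 * s)))
        measure_ball_lt_top.ne)
      hFint.integrableOn measurableSet_ball hpoint
    rwa [setIntegral_const, smul_eq_mul] at h
  rw [step1]
  exact le_trans step3 (le_trans step2 (le_of_eq rfl))

lemma tendsto_mul_log_self : Tendsto (fun δ : ℝ => δ * Real.log δ) (𝓝[>] 0) (𝓝 0) := by
  have := (Real.continuous_mul_log.tendsto 0).mono_left (nhdsWithin_le_nhds (s := Ioi (0:ℝ)))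
  simpa using this

lemma tendsto_mul_const_zero (c : ℝ) : Tendsto (fun δ : ℝ => δ * c) (𝓝[>] 0) (𝓝 0) := by
  have : Continuous fun δ : ℝ => δ * c := by fun_prop
  have := (this.tendsto 0).mono_left (nhdsWithin_le_nhds (s := Ioi (0:ℝ)))
  simpa using this

lemma limsup_step {d : ℕ} (hd : 1 ≤ d) (x : Euc d) {γ q r ε : ℝ} (hγ : 0 < γ) (hq : 0 < q)
    (hr : 0 < r) (hε : 0 < ε) (hε1 : ε < 1) :
    limsup (fun δ : ℝ => δ * Real.log
        (∫ y in {y : Euc d | r < ‖y‖}, (1 + ‖y‖ ^ q) ∂gaussMeasure x (δ * γ)))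
      (𝓝[>] 0) ≤ -((1 - ε) * (max (r - ‖x‖) 0) ^ 2) / (2 * γ) := by
  set a : ℝ := max (r - ‖x‖) 0 with ha_def
  set S : Set (Euc d) := {y : Euc d | r < ‖y‖} with hS_def
  set u : ℝ → ℝ := fun δ => δ * Real.log (∫ y in S, (1 + ‖y‖ ^ q) ∂gaussMeasure x (δ * γ))
    with hu_def
  set K0 : ℝ := 2 + Real.exp (q * ‖x‖ + q ^ 2 / (4 * (ε / (4 * γ)))) with hK0_def
  set Kc : ℝ := K0 * (2 / ε) ^ ((d : ℝ) / 2) with hKc_def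
  have hK00 : 0 < K0 := by rw [hK0_def]; positivity
  have hKc0 : 0 < Kc := by
    rw [hKc_def]
    exact mul_pos hK00 (Real.rpow_pos_of_pos (by positivity) _)
  -- the lower-bound data
  set i0 : Fin d := ⟨0, by omega⟩ with hi0
  set y0 : Euc d := EuclideanSpace.single i0 (r + 1) with hy0_def
  have hy0 : ‖y0‖ = r + 1 := by
    rw [hy0_def, EuclideanSpace.norm_single, Real.norm_eq_abs, abs_of_pos (by linarith)]
  set V : ℝ := (volume (ball y0 (1/2 : ℝ))).toReal with hV_def
  have hV : 0 < V := ENNReal.toReal_pos (measure_ball_pos volume y0 (by norm_num)).ne'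
    measure_ball_lt_top.ne
  set R : ℝ := ‖y0 - x‖ + 1/2 with hR_def
  have hR0 : 0 < R := by have := norm_nonneg (y0 - x); rw [hR_def]; linarith
  set C : ℝ := ((1 - ε) * a ^ 2) / (2 * γ) with hC_def
  -- lower bound facts for each positive δ
  have hlow : ∀ δ : ℝ, 0 < δ →
      V * ((2 * Real.pi * (δ * γ)) ^ (-(d : ℝ) / 2) * Real.exp (-R ^ 2 / (2 * (δ * γ))))
        ≤ ∫ y in S, (1 + ‖y‖ ^ q) ∂gaussMeasure x (δ * γ) := fun δ hδ =>
    lower_bound x y0 hγ hq hδ (by rw [hy0]; linarith)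
  have hIpos : ∀ δ : ℝ, 0 < δ → 0 < ∫ y in S, (1 + ‖y‖ ^ q) ∂gaussMeasure x (δ * γ) := by
    intro δ hδ
    refine lt_of_lt_of_le ?_ (hlow δ hδ)
    have : (0:ℝ) < (2 * Real.pi * (δ * γ)) ^ (-(d : ℝ) / 2) :=
      Real.rpow_pos_of_pos (by positivity) _
    positivity
  -- eventual upper bound
  have hupper : ∀ᶠ δ in 𝓝[>] (0:ℝ), u δ ≤ δ * Real.log Kc - C := by
    filter_upwards [Ioc_mem_nhdsGT_of_mem (by constructor <;> norm_num :
      (0:ℝ) ∈ Ico (0:ℝ) 1)] with δ hδ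
    obtain ⟨hδ0, hδ1⟩ := hδ
    have hI := hIpos δ hδ0
    have h1 := upper_bound x hγ hq hr hε hε1 hδ0 hδ1
    have h2 : Real.log (∫ y in S, (1 + ‖y‖ ^ q) ∂gaussMeasure x (δ * γ)) ≤
        Real.log Kc + -((1 - ε) * a ^ 2) / (2 * (δ * γ)) := by
      calc Real.log (∫ y in S, (1 + ‖y‖ ^ q) ∂gaussMeasure x (δ * γ))
          ≤ Real.log (Kc * Real.exp (-((1 - ε) * a ^ 2) / (2 * (δ * γ)))) :=
            (Real.log_le_log_iff hI (by positivity)).2 h1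
        _ = Real.log Kc + -((1 - ε) * a ^ 2) / (2 * (δ * γ)) := by
            rw [Real.log_mul hKc0.ne' (Real.exp_ne_zero _), Real.log_exp]
    have h3 := mul_le_mul_of_nonneg_left h2 hδ0.le
    calc u δ ≤ δ * (Real.log Kc + -((1 - ε) * a ^ 2) / (2 * (δ * γ))) := h3
      _ = δ * Real.log Kc - C := by
          rw [hC_def]
          field_simp
          ring
  -- eventual lower bound
  have hlower : ∀ᶠ δ in 𝓝[>] (0:ℝ),
      δ * Real.log V + (-(d : ℝ) / 2) * (δ * Real.log (2 * Real.pi * (δ * γ))) - R ^ 2 / (2 * γ)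
        ≤ u δ := by
    filter_upwards [self_mem_nhdsWithin] with δ hδ0
    replace hδ0 : (0:ℝ) < δ := hδ0
    have hI := hIpos δ hδ0
    have hcs : (0:ℝ) < (2 * Real.pi * (δ * γ)) ^ (-(d : ℝ) / 2) :=
      Real.rpow_pos_of_pos (by positivity) _
    have h2 : Real.log V + ((-(d : ℝ) / 2) * Real.log (2 * Real.pi * (δ * γ)) +
        -R ^ 2 / (2 * (δ * γ))) ≤
        Real.log (∫ y in S, (1 + ‖y‖ ^ q) ∂gaussMeasure x (δ * γ)) := by
      have hLpos : (0:ℝ) < V * ((2 * Real.pi * (δ * γ)) ^ (-(d : ℝ) / 2) *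
          Real.exp (-R ^ 2 / (2 * (δ * γ)))) := by positivity
      calc Real.log V + ((-(d : ℝ) / 2) * Real.log (2 * Real.pi * (δ * γ)) +
            -R ^ 2 / (2 * (δ * γ)))
          = Real.log (V * ((2 * Real.pi * (δ * γ)) ^ (-(d : ℝ) / 2) *
              Real.exp (-R ^ 2 / (2 * (δ * γ))))) := by
            rw [Real.log_mul hV.ne' (by positivity), Real.log_mul hcs.ne' (Real.exp_ne_zero _),
              Real.log_exp, Real.log_rpow (by positivity)]
        _ ≤ _ := (Real.log_le_log_iff hLpos hI).2 (hlow δ hδ0)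
    have h3 := mul_le_mul_of_nonneg_left h2 hδ0.le
    calc δ * Real.log V + (-(d : ℝ) / 2) * (δ * Real.log (2 * Real.pi * (δ * γ)))
          - R ^ 2 / (2 * γ)
        = δ * (Real.log V + ((-(d : ℝ) / 2) * Real.log (2 * Real.pi * (δ * γ)) +
            -R ^ 2 / (2 * (δ * γ)))) := by
          field_simp
          ring
      _ ≤ u δ := h3
  -- the lower bounding function tends to a finite limit
  have hwt : Tendsto (fun δ : ℝ =>
      δ * Real.log V + (-(d : ℝ) / 2) * (δ * Real.log (2 * Real.pi * (δ * γ)))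
        - R ^ 2 / (2 * γ)) (𝓝[>] 0) (𝓝 (-(R ^ 2 / (2 * γ)))) := by
    have t3 : Tendsto (fun δ : ℝ => δ * Real.log (2 * Real.pi * (δ * γ))) (𝓝[>] 0) (𝓝 0) := by
      have heq : (fun δ : ℝ => δ * Real.log (2 * Real.pi * γ) + δ * Real.log δ)
          =ᶠ[𝓝[>] (0:ℝ)] fun δ : ℝ => δ * Real.log (2 * Real.pi * (δ * γ)) := by
        filter_upwards [self_mem_nhdsWithin] with δ hδ0
        replace hδ0 : (0:ℝ) < δ := hδ0
        have : 2 * Real.pi * (δ * γ) = (2 * Real.pi * γ) * δ := by ring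
        rw [this, Real.log_mul (by positivity) hδ0.ne']
        ring
      have := (tendsto_mul_const_zero (Real.log (2 * Real.pi * γ))).add tendsto_mul_log_self
      simpa using this.congr' heq
    have := ((tendsto_mul_const_zero (Real.log V)).add (t3.const_mul (-(d : ℝ) / 2))).sub
      (tendsto_const_nhds (x := R ^ 2 / (2 * γ)) (f := 𝓝[>] (0:ℝ)))
    simpa using this
  have hcob : IsCoboundedUnder (· ≤ ·) (𝓝[>] (0:ℝ)) u := by
    refine isCoboundedUnder_le_of_eventually_le (𝓝[>] (0:ℝ)) (x := -(R ^ 2 / (2 * γ)) - 1) ?_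
    filter_upwards [hlower, hwt.eventually (eventually_gt_nhds
      (by linarith : -(R ^ 2 / (2 * γ)) - 1 < -(R ^ 2 / (2 * γ))))] with δ h1 h2
    linarith
  -- the upper bounding function tends to -C
  have hvt : Tendsto (fun δ : ℝ => δ * Real.log Kc - C) (𝓝[>] 0) (𝓝 (-C)) := by
    have := (tendsto_mul_const_zero (Real.log Kc)).sub
      (tendsto_const_nhds (x := C) (f := 𝓝[>] (0:ℝ)))
    simpa using this
  have hfinal := limsup_le_limsup hupper hcob hvt.isBoundedUnder_le
  rw [hvt.limsup_eq] at hfinal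
  calc limsup u (𝓝[>] (0:ℝ)) ≤ -C := hfinal
    _ = -((1 - ε) * a ^ 2) / (2 * γ) := by rw [hC_def]; ring


/-- Lemma B.5, Gaussian tail with polynomial weight. -/
theorem pbh_stmt_17 {d : ℕ} (hd : 1 ≤ d) (x : Euc d) (γ : ℝ) (hγ : 0 < γ)
    (q r : ℝ) (hq : 0 < q) (hr : 0 < r) :
    limsup (fun δ : ℝ => δ * Real.log
        (∫ y in {y : Euc d | r < ‖y‖}, (1 + ‖y‖ ^ q) ∂gaussMeasure x (δ * γ)))
      (𝓝[>] 0) ≤ -(max (r - ‖x‖) 0) ^ 2 / (2 * γ) := by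
  set a : ℝ := max (r - ‖x‖) 0 with ha_def
  set L : ℝ := limsup (fun δ : ℝ => δ * Real.log
      (∫ y in {y : Euc d | r < ‖y‖}, (1 + ‖y‖ ^ q) ∂gaussMeasure x (δ * γ))) (𝓝[>] 0) with hL
  have key : ∀ ε ∈ Ioo (0:ℝ) 1, L ≤ -((1 - ε) * a ^ 2) / (2 * γ) := fun ε hε =>
    limsup_step hd x hγ hq hr hε.1 hε.2
  have ht : Tendsto (fun ε : ℝ => -((1 - ε) * a ^ 2) / (2 * γ)) (𝓝[>] 0)
      (𝓝 (-a ^ 2 / (2 * γ))) := by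
    have hc : Continuous fun ε : ℝ => -((1 - ε) * a ^ 2) / (2 * γ) := by fun_prop
    have := (hc.tendsto 0).mono_left (nhdsWithin_le_nhds (s := Ioi (0:ℝ)))
    simpa using this
  exact ge_of_tendsto ht (by
    filter_upwards [Ioo_mem_nhdsGT_of_mem (by constructor <;> norm_num :
      (0:ℝ) ∈ Ico (0:ℝ) 1)] with ε hε using key ε hε)
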